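/- For every k-coloring c of the plane and every real R > 1, |p^per(c̃_R) − p^table_R(c)| ≤ 8/R, where c̃_R is the periodic coloring obtained by restricting c to the square [−R, R]² and tiling the plane with this square (periods (2R, 0) and (0, 2R)). -/

import Mathlib

open MeasureTheory Real

noncomputable section

abbrev Plane := EuclideanSpace ℝ (Fin 2)

def vec (x y : ℝ) : Plane := (WithLp.equiv 2 (Fin 2 → ℝ)).symm ![x, y]

def dir (θ : ℝ) : Plane := vec (Real.cos θ) (Real.sin θ)

/-- The fundamental parallelogram `{t•u + s•v : 0 ≤ t, s < 1}`. -/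
def para (u v : Plane) : Set Plane :=
  {x | ∃ t s : ℝ, 0 ≤ t ∧ t < 1 ∧ 0 ≤ s ∧ s < 1 ∧ x = t • u + s • v}

/-- `p^per(c)` for a periodic coloring with fundamental parallelogram `para u v`. -/
def pper {k : ℕ} (c : Plane → Fin k) (u v : Plane) : ℝ :=
  (1 / (2 * π * (volume (para u v)).toReal)) *
    ∫ a in para u v, ∫ θ in (0:ℝ)..(2*π),
      (if c a = c (a + dir θ) then (1:ℝ) else 0)

/-- The square `[-R, R]²`. -/
def square (R : ℝ) : Set Plane := {x | x 0 ∈ Set.Icc (-R) R ∧ x 1 ∈ Set.Icc (-R) R}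

-- `p^table(c)` on the "table" `P`: the conditional probability that both endpoints of a
-- random needle have the same color, given that the second endpoint also lands in `P`.
open Classical in
def ptableSet {k : ℕ} (c : Plane → Fin k) (P : Set Plane) : ℝ :=
  (∫ a in P, ∫ θ in (0:ℝ)..(2*π),
      (if c a = c (a + dir θ) ∧ a + dir θ ∈ P then (1:ℝ) else 0)) /
  (∫ a in P, ∫ θ in (0:ℝ)..(2*π), (if a + dir θ ∈ P then (1:ℝ) else 0))

/-- `p^table_R(c)`, on the square table `[-R, R]²`. -/
def ptable {k : ℕ} (c : Plane → Fin k) (R : ℝ) : ℝ := ptableSet c (square R)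

/-- The half-open tile `[-R, R)²`. -/
def squareHalf (R : ℝ) : Set Plane :=
  {x | x 0 ∈ Set.Ico (-R) R ∧ x 1 ∈ Set.Ico (-R) R}

set_option linter.unusedSectionVars false
set_option linter.unusedVariables false

-- ===================== auxiliary material =====================

def box (a b a' b' : ℝ) : Set Plane := {x | x 0 ∈ Set.Ico a b ∧ x 1 ∈ Set.Ico a' b'}

lemma box_eq_preimage (a b a' b' : ℝ) :
    box a b a' b' = (MeasurableEquiv.toLp 2 (Fin 2 → ℝ)).symm ⁻¹'
      (Set.univ.pi ![Set.Ico a b, Set.Ico a' b']) := by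
  ext x
  simp only [box, Set.mem_setOf_eq, Set.mem_preimage, Set.mem_pi, Set.mem_univ, true_implies]
  constructor
  · rintro ⟨h0, h1⟩ i
    fin_cases i <;> simpa using ‹_›
  · intro h
    exact ⟨by simpa using h 0, by simpa using h 1⟩

lemma volume_box (a b a' b' : ℝ) :
    volume (box a b a' b') = ENNReal.ofReal (b - a) * ENNReal.ofReal (b' - a') := by
  rw [box_eq_preimage,
    (EuclideanSpace.volume_preserving_symm_measurableEquiv_toLp (Fin 2)).measure_preimage
      ((MeasurableSet.univ_pi (fun i => by fin_cases i <;> exact measurableSet_Ico)).nullMeasurableSet)]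
  rw [volume_pi_pi]
  simp [Fin.prod_univ_two, Real.volume_Ico]

section generic
variable {f : Plane → ℝ → ℝ}
  (hf : Measurable (Function.uncurry f))
  (h0 : ∀ a θ, 0 ≤ f a θ) (h1 : ∀ a θ, f a θ ≤ 1)

include hf h0 h1

lemma L1 (a : Plane) : IntervalIntegrable (f a) volume 0 (2*π) := by
  rw [intervalIntegrable_iff_integrableOn_Ioc_of_le (by positivity)]
  apply Measure.integrableOn_of_bounded (measure_Ioc_lt_top).ne
    ((hf.comp (measurable_prodMk_left)).aestronglyMeasurable)
  · filter_upwards with θ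
    rw [Real.norm_eq_abs, abs_le]
    exact ⟨by simpa [Function.uncurry] using (by linarith [h0 a θ] : (-1:ℝ) ≤ f a θ), h1 a θ⟩

lemma L2a (a : Plane) : 0 ≤ ∫ θ in (0:ℝ)..(2*π), f a θ :=
  intervalIntegral.integral_nonneg (by positivity) (fun θ _ => h0 a θ)

lemma L2b (a : Plane) : (∫ θ in (0:ℝ)..(2*π), f a θ) ≤ 2*π := by
  calc (∫ θ in (0:ℝ)..(2*π), f a θ) ≤ ∫ θ in (0:ℝ)..(2*π), (1:ℝ) := by
        apply intervalIntegral.integral_mono_on (by positivity) (L1 hf h0 h1 a)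
          intervalIntegrable_const (fun θ _ => h1 a θ)
    _ = 2*π := by simp

lemma L3 : Measurable (fun a => ∫ θ in (0:ℝ)..(2*π), f a θ) := by
  have : (fun a => ∫ θ in (0:ℝ)..(2*π), f a θ)
      = fun a => ∫ θ, f a θ ∂(volume.restrict (Set.Ioc 0 (2*π))) := by
    funext a
    rw [intervalIntegral.integral_of_le (by positivity)]
  rw [this]
  exact (StronglyMeasurable.integral_prod_right hf.stronglyMeasurable).measurable

lemma L4 {s : Set Plane} (hs : volume s ≠ ⊤) :
    IntegrableOn (fun a => ∫ θ in (0:ℝ)..(2*π), f a θ) s := by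
  apply Measure.integrableOn_of_bounded hs (L3 hf h0 h1).aestronglyMeasurable
    (M := 2*π)
  filter_upwards with a
  rw [Real.norm_eq_abs, abs_le]
  exact ⟨by linarith [L2a hf h0 h1 a, pi_pos], L2b hf h0 h1 a⟩

end generic

lemma plane_ext {x y : Plane} (hx : x 0 = y 0) (hy : x 1 = y 1) : x = y := by
  ext i; fin_cases i <;> assumption

lemma vec_apply0 (x y : ℝ) : vec x y 0 = x := rfl
lemma vec_apply1 (x y : ℝ) : vec x y 1 = y := rfl
lemma padd_apply (a b : Plane) (i : Fin 2) : (a + b) i = a i + b i := rfl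
lemma smul_apply' (t : ℝ) (a : Plane) (i : Fin 2) : (t • a) i = t * a i := rfl

lemma measurableSet_box (a b a' b' : ℝ) : MeasurableSet (box a b a' b') := by
  have : box a b a' b' = (fun x : Plane => x 0) ⁻¹' (Set.Ico a b) ∩
      (fun x : Plane => x 1) ⁻¹' (Set.Ico a' b') := rfl
  rw [this]
  have m0 : Measurable (fun x : Plane => x 0) := (measurable_pi_apply 0).comp (WithLp.measurable_ofLp 2 (Fin 2 → ℝ))
  have m1 : Measurable (fun x : Plane => x 1) := (measurable_pi_apply 1).comp (WithLp.measurable_ofLp 2 (Fin 2 → ℝ))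
  exact (m0 measurableSet_Ico).inter (m1 measurableSet_Ico)

lemma para_eq_box {R : ℝ} (hR : 0 < R) : para (vec (2*R) 0) (vec 0 (2*R)) = box 0 (2*R) 0 (2*R) := by
  ext x
  constructor
  · rintro ⟨t, s, ht0, ht1, hs0, hs1, rfl⟩
    constructor
    · simp only [padd_apply, smul_apply', vec_apply0]
      constructor <;> nlinarith
    · simp only [padd_apply, smul_apply', vec_apply1]
      constructor <;> nlinarith
  · rintro ⟨⟨h0a, h0b⟩, ⟨h1a, h1b⟩⟩
    refine ⟨x 0 / (2*R), x 1 / (2*R), by positivity, by rw [div_lt_one (by positivity)]; linarith,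
      by positivity, by rw [div_lt_one (by positivity)]; linarith, ?_⟩
    apply plane_ext
    · simp only [padd_apply, smul_apply', vec_apply0]
      field_simp
      ring
    · simp only [padd_apply, smul_apply', vec_apply1]
      field_simp
      ring

-- translation of box
lemma box_translate (p q a b a' b' : ℝ) :
    (fun x => x + vec p q) '' box a b a' b' = box (a+p) (b+p) (a'+q) (b'+q) := by
  ext y
  constructor
  · rintro ⟨x, ⟨⟨h1,h2⟩,⟨h3,h4⟩⟩, rfl⟩
    refine ⟨⟨?_,?_⟩,⟨?_,?_⟩⟩ <;> simp only [padd_apply, vec_apply0, vec_apply1] <;> linarith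
  · rintro ⟨⟨h1,h2⟩,⟨h3,h4⟩⟩
    refine ⟨y - vec p q, ⟨⟨?_,?_⟩,⟨?_,?_⟩⟩, by simp⟩ <;>
      simp only [Set.mem_Ico, PiLp.sub_apply, vec_apply0, vec_apply1] <;> linarith

lemma setIntegral_box_translate (g : Plane → ℝ) (p q a b a' b' : ℝ) :
    ∫ x in box (a+p) (b+p) (a'+q) (b'+q), g x = ∫ x in box a b a' b', g (x + vec p q) := by
  rw [← box_translate]
  exact (measurePreserving_add_right volume (vec p q)).setIntegral_image_emb
    (measurableEmbedding_addRight _) g _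

lemma box_split0 {a b c a' b' : ℝ} (hab : a ≤ b) (hbc : b ≤ c) :
    box a c a' b' = box a b a' b' ∪ box b c a' b' := by
  ext x
  simp only [box, Set.mem_setOf_eq, Set.mem_union, Set.mem_Ico]
  constructor
  · rintro ⟨⟨h1,h2⟩, h3⟩
    rcases lt_or_ge (x 0) b with h | h
    · exact Or.inl ⟨⟨h1, h⟩, h3⟩
    · exact Or.inr ⟨⟨h, h2⟩, h3⟩
  · rintro (⟨⟨h1,h2⟩,h3⟩ | ⟨⟨h1,h2⟩,h3⟩) <;> exact ⟨⟨by linarith, by linarith⟩, h3⟩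

lemma box_split1 {a b a' b' c' : ℝ} (hab : a' ≤ b') (hbc : b' ≤ c') :
    box a b a' c' = box a b a' b' ∪ box a b b' c' := by
  ext x
  simp only [box, Set.mem_setOf_eq, Set.mem_union, Set.mem_Ico]
  constructor
  · rintro ⟨h3, ⟨h1,h2⟩⟩
    rcases lt_or_ge (x 1) b' with h | h
    · exact Or.inl ⟨h3, ⟨h1, h⟩⟩
    · exact Or.inr ⟨h3, ⟨h, h2⟩⟩
  · rintro (⟨h3,h1,h2⟩ | ⟨h3,h1,h2⟩) <;> exact ⟨h3, ⟨by linarith, by linarith⟩⟩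


lemma box_subset_box0 {a b c d a' b' : ℝ} (h1 : a ≤ c) (h2 : d ≤ b) :
    box c d a' b' ⊆ box a b a' b' := by
  rintro x ⟨⟨u1,u2⟩, h3⟩
  exact ⟨⟨by linarith, by linarith⟩, h3⟩

lemma box_subset_box1 {a b a' b' c' d' : ℝ} (h1 : a' ≤ c') (h2 : d' ≤ b') :
    box a b c' d' ⊆ box a b a' b' := by
  rintro x ⟨h3, ⟨u1,u2⟩⟩
  exact ⟨h3, ⟨by linarith, by linarith⟩⟩

lemma box_disjoint0 {a b c d a' b' : ℝ} (h : b ≤ c) :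
    Disjoint (box a b a' b') (box c d a' b') := by
  rw [Set.disjoint_left]
  rintro x ⟨⟨_,h2⟩,_⟩ ⟨⟨h3,_⟩,_⟩
  linarith

lemma box_disjoint1 {a b a' b' c' d' : ℝ} (h : b' ≤ c') :
    Disjoint (box a b a' b') (box a b c' d') := by
  rw [Set.disjoint_left]
  rintro x ⟨_,⟨_,h2⟩⟩ ⟨_,⟨h3,_⟩⟩
  linarith

lemma setIntegral_box_split0 {a b c a' b' : ℝ} (g : Plane → ℝ)
    (hg : IntegrableOn g (box a c a' b')) (hab : a ≤ b) (hbc : b ≤ c) :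
    ∫ x in box a c a' b', g x = (∫ x in box a b a' b', g x) + ∫ x in box b c a' b', g x := by
  rw [box_split0 hab hbc]
  exact setIntegral_union (box_disjoint0 le_rfl) (measurableSet_box _ _ _ _)
    (hg.mono_set (box_subset_box0 le_rfl hbc)) (hg.mono_set (box_subset_box0 hab le_rfl))

lemma setIntegral_box_split1 {a b a' b' c' : ℝ} (g : Plane → ℝ)
    (hg : IntegrableOn g (box a b a' c')) (hab : a' ≤ b') (hbc : b' ≤ c') :
    ∫ x in box a b a' c', g x = (∫ x in box a b a' b', g x) + ∫ x in box a b b' c', g x := by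
  rw [box_split1 hab hbc]
  exact setIntegral_union (box_disjoint1 le_rfl) (measurableSet_box _ _ _ _)
    (hg.mono_set (box_subset_box1 le_rfl hbc)) (hg.mono_set (box_subset_box1 hab le_rfl))

lemma setIntegral_box_translate2 (g : Plane → ℝ) {p q a b a' b' A B A' B' : ℝ}
    (hA : A = a + p) (hB : B = b + p) (hA' : A' = a' + q) (hB' : B' = b' + q)
    (hg : ∀ x, g (x + vec p q) = g x) :
    ∫ x in box A B A' B', g x = ∫ x in box a b a' b', g x := by
  subst hA hB hA' hB'
  rw [setIntegral_box_translate]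
  simp only [hg]

lemma transfer {R : ℝ} (hR : 0 < R) (g : Plane → ℝ)
    (hInt : ∀ a b a' b' : ℝ, IntegrableOn g (box a b a' b'))
    (hu : ∀ x, g (x + vec (2*R) 0) = g x) (hv : ∀ x, g (x + vec 0 (2*R)) = g x) :
    ∫ x in box 0 (2*R) 0 (2*R), g x = ∫ x in box (-R) R (-R) R, g x := by
  have huv : ∀ x, g (x + vec (2*R) (2*R)) = g x := by
    intro x
    have : x + vec (2*R) (2*R) = (x + vec 0 (2*R)) + vec (2*R) 0 := by
      apply plane_ext <;>
        simp only [padd_apply, vec_apply0, vec_apply1] <;> ring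
    rw [this, hu, hv]
  have hB : ∫ x in box 0 R R (2*R), g x = ∫ x in box 0 R (-R) 0, g x :=
    setIntegral_box_translate2 g (p := 0) (q := 2*R) (by ring) (by ring) (by ring) (by ring) hv
  have hC : ∫ x in box R (2*R) 0 R, g x = ∫ x in box (-R) 0 0 R, g x :=
    setIntegral_box_translate2 g (p := 2*R) (q := 0) (by ring) (by ring) (by ring) (by ring) hu
  have hD : ∫ x in box R (2*R) R (2*R), g x = ∫ x in box (-R) 0 (-R) 0, g x :=
    setIntegral_box_translate2 g (p := 2*R) (q := 2*R) (by ring) (by ring) (by ring) (by ring) huv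
  have s1 : ∫ x in box 0 (2*R) 0 (2*R), g x
      = (∫ x in box 0 R 0 (2*R), g x) + ∫ x in box R (2*R) 0 (2*R), g x :=
    setIntegral_box_split0 g (hInt _ _ _ _) (by linarith) (by linarith)
  have s2 : ∫ x in box 0 R 0 (2*R), g x
      = (∫ x in box 0 R 0 R, g x) + ∫ x in box 0 R R (2*R), g x :=
    setIntegral_box_split1 g (hInt _ _ _ _) (by linarith) (by linarith)
  have s3 : ∫ x in box R (2*R) 0 (2*R), g x
      = (∫ x in box R (2*R) 0 R, g x) + ∫ x in box R (2*R) R (2*R), g x :=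
    setIntegral_box_split1 g (hInt _ _ _ _) (by linarith) (by linarith)
  have s4 : ∫ x in box (-R) R (-R) R, g x
      = (∫ x in box (-R) 0 (-R) R, g x) + ∫ x in box 0 R (-R) R, g x :=
    setIntegral_box_split0 g (hInt _ _ _ _) (by linarith) (by linarith)
  have s5 : ∫ x in box (-R) 0 (-R) R, g x
      = (∫ x in box (-R) 0 (-R) 0, g x) + ∫ x in box (-R) 0 0 R, g x :=
    setIntegral_box_split1 g (hInt _ _ _ _) (by linarith) (by linarith)
  have s6 : ∫ x in box 0 R (-R) R, g x
      = (∫ x in box 0 R (-R) 0, g x) + ∫ x in box 0 R 0 R, g x :=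
    setIntegral_box_split1 g (hInt _ _ _ _) (by linarith) (by linarith)
  rw [s1, s2, s3, s4, s5, s6, hB, hC, hD]
  ring

-- ctilde measurability
def wrapc (R t : ℝ) : ℝ := t - 2*R*⌊(t+R)/(2*R)⌋

lemma wrapc_mem {R : ℝ} (hR : 0 < R) (t : ℝ) : wrapc R t ∈ Set.Ico (-R) R := by
  have h1 : (⌊(t+R)/(2*R)⌋ : ℝ) ≤ (t+R)/(2*R) := Int.floor_le _
  have h2 : (t+R)/(2*R) < ⌊(t+R)/(2*R)⌋ + 1 := Int.lt_floor_add_one _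
  have hpos : (0:ℝ) < 2*R := by linarith
  have h1' : (⌊(t+R)/(2*R)⌋ : ℝ) * (2*R) ≤ t + R := (le_div_iff₀ hpos).mp h1
  have h2' : t + R < ((⌊(t+R)/(2*R)⌋ : ℝ) + 1) * (2*R) := (div_lt_iff₀ hpos).mp h2
  unfold wrapc
  constructor <;> nlinarith

def wrap (R : ℝ) (x : Plane) : Plane := vec (wrapc R (x 0)) (wrapc R (x 1))

lemma measurable_wrap (R : ℝ) : Measurable (wrap R) := by
  have hw : Measurable (wrapc R) := by
    unfold wrapc
    apply measurable_id.sub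
    apply measurable_const.mul
    have hfl : Measurable (fun t : ℝ => ⌊(t+R)/(2*R)⌋) :=
      ((measurable_id.add_const R).div_const _).floor
    exact Measurable.comp (measurable_from_top (α := ℤ)) hfl
  have m0 : Measurable (fun x : Plane => x 0) := (measurable_pi_apply 0).comp (WithLp.measurable_ofLp 2 (Fin 2 → ℝ))
  have m1 : Measurable (fun x : Plane => x 1) := (measurable_pi_apply 1).comp (WithLp.measurable_ofLp 2 (Fin 2 → ℝ))
  have : Measurable (fun x : Plane => (wrap R x : Fin 2 → ℝ)) := by
    apply measurable_pi_lambda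
    intro i
    fin_cases i
    · exact hw.comp m0
    · exact hw.comp m1
  exact (WithLp.measurable_toLp 2 (Fin 2 → ℝ)).comp this

section ct
variable {k : ℕ} {R : ℝ} {ctilde : Plane → Fin k}

lemma periodz (hper : ∀ x : Plane, ctilde (x + vec (2*R) 0) = ctilde x ∧
      ctilde (x + vec 0 (2*R)) = ctilde x) :
    ∀ (m n : ℤ) (x : Plane), ctilde (x + (m:ℝ) • vec (2*R) 0 + (n:ℝ) • vec 0 (2*R)) = ctilde x := by
  have h0 : ∀ (m : ℤ) (x : Plane), ctilde (x + (m:ℝ) • vec (2*R) 0) = ctilde x := by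
    intro m
    induction m using Int.induction_on with
    | zero => intro x; simp
    | succ m ih =>
        intro x
        have h : x + ((m+1 : ℤ):ℝ) • vec (2*R) 0 = (x + (m:ℝ) • vec (2*R) 0) + vec (2*R) 0 := by
          push_cast; rw [add_smul, one_smul, add_assoc]
        rw [h, (hper _).1]
        exact ih x
    | pred m ih =>
        intro x
        have key : (x + ((-(m:ℤ)-1 : ℤ):ℝ) • vec (2*R) 0) + vec (2*R) 0
            = x + ((-(m:ℤ) : ℤ):ℝ) • vec (2*R) 0 := by
          push_cast; rw [sub_smul, one_smul]; abel
        calc ctilde (x + ((-(m:ℤ)-1:ℤ):ℝ) • vec (2*R) 0)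
            = ctilde ((x + ((-(m:ℤ)-1:ℤ):ℝ) • vec (2*R) 0) + vec (2*R) 0) := ((hper _).1).symm
          _ = ctilde x := by rw [key]; exact ih x
  have h1 : ∀ (n : ℤ) (x : Plane), ctilde (x + (n:ℝ) • vec 0 (2*R)) = ctilde x := by
    intro n
    induction n using Int.induction_on with
    | zero => intro x; simp
    | succ m ih =>
        intro x
        have h : x + ((m+1 : ℤ):ℝ) • vec 0 (2*R) = (x + (m:ℝ) • vec 0 (2*R)) + vec 0 (2*R) := by
          push_cast; rw [add_smul, one_smul, add_assoc]
        rw [h, (hper _).2]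
        exact ih x
    | pred m ih =>
        intro x
        have key : (x + ((-(m:ℤ)-1 : ℤ):ℝ) • vec 0 (2*R)) + vec 0 (2*R)
            = x + ((-(m:ℤ) : ℤ):ℝ) • vec 0 (2*R) := by
          push_cast; rw [sub_smul, one_smul]; abel
        calc ctilde (x + ((-(m:ℤ)-1:ℤ):ℝ) • vec 0 (2*R))
            = ctilde ((x + ((-(m:ℤ)-1:ℤ):ℝ) • vec 0 (2*R)) + vec 0 (2*R)) := ((hper _).2).symm
          _ = ctilde x := by rw [key]; exact ih x
  intro m n x
  rw [h1 n _, h0 m x]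

lemma wrap_eq (hR : 0 < R)
    (hper : ∀ x : Plane, ctilde (x + vec (2*R) 0) = ctilde x ∧
      ctilde (x + vec 0 (2*R)) = ctilde x) (x : Plane) :
    ctilde (wrap R x) = ctilde x := by
  have h := periodz hper (-⌊(x 0 + R)/(2*R)⌋) (-⌊(x 1 + R)/(2*R)⌋) x
  have e : x + ((-⌊(x 0 + R)/(2*R)⌋ : ℤ):ℝ) • vec (2*R) 0
      + ((-⌊(x 1 + R)/(2*R)⌋ : ℤ):ℝ) • vec 0 (2*R) = wrap R x := by
    apply plane_ext <;>
      simp only [padd_apply, smul_apply', vec_apply0, vec_apply1, wrap, wrapc,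
        Int.cast_neg] <;> ring
  rw [e] at h
  exact h

end ct



lemma measurableSet_square (R : ℝ) : MeasurableSet (square R) := by
  have m0 : Measurable (fun x : Plane => x 0) := (measurable_pi_apply 0).comp (WithLp.measurable_ofLp 2 (Fin 2 → ℝ))
  have m1 : Measurable (fun x : Plane => x 1) := (measurable_pi_apply 1).comp (WithLp.measurable_ofLp 2 (Fin 2 → ℝ))
  exact (m0 measurableSet_Icc).inter (m1 measurableSet_Icc)

lemma volume_line0 (R : ℝ) : volume {x : Plane | x 0 = R} = 0 := by
  have : {x : Plane | x 0 = R} = (MeasurableEquiv.toLp 2 (Fin 2 → ℝ)).symm ⁻¹'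
      (Set.univ.pi ![{R}, Set.univ]) := by
    ext x
    simp only [Set.mem_setOf_eq, Set.mem_preimage, Set.mem_pi, Set.mem_univ, true_implies]
    constructor
    · intro h i; fin_cases i <;> simpa using h
    · intro h; simpa using h 0
  rw [this, (EuclideanSpace.volume_preserving_symm_measurableEquiv_toLp (Fin 2)).measure_preimage
      ((MeasurableSet.univ_pi (fun i => by
        fin_cases i <;> simp [MeasurableSet.singleton])).nullMeasurableSet),
    volume_pi_pi]
  simp [Fin.prod_univ_two]

lemma volume_line1 (R : ℝ) : volume {x : Plane | x 1 = R} = 0 := by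
  have : {x : Plane | x 1 = R} = (MeasurableEquiv.toLp 2 (Fin 2 → ℝ)).symm ⁻¹'
      (Set.univ.pi ![Set.univ, {R}]) := by
    ext x
    simp only [Set.mem_setOf_eq, Set.mem_preimage, Set.mem_pi, Set.mem_univ, true_implies]
    constructor
    · intro h i; fin_cases i <;> simpa using h
    · intro h; simpa using h 1
  rw [this, (EuclideanSpace.volume_preserving_symm_measurableEquiv_toLp (Fin 2)).measure_preimage
      ((MeasurableSet.univ_pi (fun i => by
        fin_cases i <;> simp [MeasurableSet.singleton])).nullMeasurableSet),
    volume_pi_pi]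
  simp [Fin.prod_univ_two]

lemma square_ae_squareHalf (R : ℝ) : square R =ᶠ[ae volume] squareHalf R := by
  rw [MeasureTheory.ae_eq_set]
  constructor
  · refine measure_mono_null ?_ (measure_union_null (volume_line0 R) (volume_line1 R))
    rintro x ⟨⟨⟨h1,h2⟩,⟨h3,h4⟩⟩, hn⟩
    by_contra hcon
    simp only [Set.mem_union, Set.mem_setOf_eq, not_or] at hcon
    exact hn ⟨⟨h1, lt_of_le_of_ne h2 hcon.1⟩, ⟨h3, lt_of_le_of_ne h4 hcon.2⟩⟩
  · refine measure_mono_null ?_ (OuterMeasureClass.measure_empty volume)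
    rintro x ⟨⟨⟨h1,h2⟩,⟨h3,h4⟩⟩, hn⟩
    exact absurd ⟨⟨h1, le_of_lt h2⟩, ⟨h3, le_of_lt h4⟩⟩ hn

lemma meas_eq {α : Type*} [MeasurableSpace α] {k : ℕ} {g h : α → Fin k}
    (hg : Measurable g) (hh : Measurable h) : MeasurableSet {x | g x = h x} := by
  have : {x | g x = h x} = ⋃ i : Fin k, g ⁻¹' {i} ∩ h ⁻¹' {i} := by
    ext x
    simp only [Set.mem_setOf_eq, Set.mem_iUnion, Set.mem_inter_iff, Set.mem_preimage,
      Set.mem_singleton_iff]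
    exact ⟨fun he => ⟨g x, rfl, he.symm⟩, fun ⟨i, h1, h2⟩ => h1.trans h2.symm⟩
  rw [this]
  exact MeasurableSet.iUnion (fun i => (hg (MeasurableSet.singleton i)).inter
    (hh (MeasurableSet.singleton i)))

lemma meas_ite {α : Type*} [MeasurableSpace α] {P : α → Prop} [DecidablePred P]
    (hS : MeasurableSet {x | P x}) : Measurable (fun x => if P x then (1:ℝ) else 0) := by
  have : (fun x => if P x then (1:ℝ) else 0) = Set.indicator {x | P x} (fun _ => 1) := by
    funext x
    by_cases h : P x <;> simp [h, Set.indicator_apply, Set.mem_setOf_eq]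
  rw [this]
  exact measurable_const.indicator hS

lemma measurable_dirmap : Measurable (fun p : Plane × ℝ => p.1 + dir p.2) := by
  have hdir : Measurable (dir : ℝ → Plane) := by
    have : Measurable (fun θ : ℝ => (dir θ : Fin 2 → ℝ)) := by
      apply measurable_pi_lambda
      intro i
      fin_cases i
      · exact Real.measurable_cos
      · exact Real.measurable_sin
    exact (WithLp.measurable_toLp 2 (Fin 2 → ℝ)).comp this
  exact measurable_fst.add (hdir.comp measurable_snd)


def F1 {k : ℕ} (ct : Plane → Fin k) : Plane → ℝ → ℝ :=
  fun a θ => if ct a = ct (a + dir θ) then 1 else 0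

open Classical in
def G2 {k : ℕ} (c : Plane → Fin k) (R : ℝ) : Plane → ℝ → ℝ :=
  fun a θ => if c a = c (a + dir θ) ∧ a + dir θ ∈ square R then 1 else 0

open Classical in
def H2 (R : ℝ) : Plane → ℝ → ℝ :=
  fun a θ => if a + dir θ ∈ square R then 1 else 0

lemma pper_eq {k : ℕ} (ct : Plane → Fin k) (u v : Plane) :
    pper ct u v = (1 / (2 * π * (volume (para u v)).toReal)) *
      ∫ a in para u v, ∫ θ in (0:ℝ)..(2*π), F1 ct a θ := rfl

lemma ptable_eq {k : ℕ} (c : Plane → Fin k) (R : ℝ) :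
    ptable c R = (∫ a in square R, ∫ θ in (0:ℝ)..(2*π), G2 c R a θ) /
      (∫ a in square R, ∫ θ in (0:ℝ)..(2*π), H2 R a θ) := rfl

lemma squareHalf_eq_box (R : ℝ) : squareHalf R = box (-R) R (-R) R := rfl

lemma harith (R : ℝ) (hR : 1 < R) (I N M : ℝ)
    (hIN : |I - N| ≤ 2*π*(8*R - 4)) (hN0 : 0 ≤ N) (hNM : N ≤ M)
    (hMl : 2*π*((2*R-2)*(2*R-2)) ≤ M) (hMh : M ≤ 2*π*(2*R*(2*R))) :
    |1 / (2*π*(2*R*(2*R))) * I - N / M| ≤ 8 / R := by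
  have hπ : (0:ℝ) < π := pi_pos
  have hR0 : (0:ℝ) < R := by linarith
  have h2 : (0:ℝ) < 2*R - 2 := by linarith
  have hM0 : (0:ℝ) < M :=
    lt_of_lt_of_le (mul_pos (by linarith) (mul_pos h2 h2)) hMl
  set D : ℝ := 2*π*(2*R*(2*R)) with hD
  have hD0 : (0:ℝ) < D := by rw [hD]; positivity
  have hDM : D - M ≤ 2*π*(8*R - 4) := by
    have : D - 2*π*((2*R-2)*(2*R-2)) = 2*π*(8*R-4) := by rw [hD]; ring
    linarith
  have e : 1/D * I - N/M = (I - N)/D + (N*(M - D))/(D*M) := by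
    field_simp
    ring
  rw [e]
  calc |(I - N)/D + (N*(M - D))/(D*M)|
      ≤ |(I - N)/D| + |(N*(M - D))/(D*M)| := abs_add_le _ _
    _ ≤ (2*π*(8*R-4))/D + (2*π*(8*R-4))/D := by
        gcongr ?_ + ?_
        · rw [abs_div, abs_of_pos hD0]
          gcongr
        · rw [abs_div, abs_of_pos (mul_pos hD0 hM0), abs_mul, abs_of_nonneg hN0]
          rw [abs_of_nonpos (by linarith : M - D ≤ 0), neg_sub]
          rw [div_le_div_iff₀ (mul_pos hD0 hM0) hD0]
          have key : N * (D - M) ≤ M * (2*π*(8*R-4)) :=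
            mul_le_mul hNM hDM (by linarith) (le_of_lt hM0)
          calc N * (D - M) * D ≤ M * (2*π*(8*R-4)) * D :=
                mul_le_mul_of_nonneg_right key (le_of_lt hD0)
            _ = 2*π*(8*R-4) * (D * M) := by ring
    _ = (2*π*(8*R-4) + 2*π*(8*R-4))/D := by rw [← add_div]
    _ ≤ 8 / R := by
        rw [div_le_div_iff₀ hD0 (by linarith : (0:ℝ) < R), hD]
        nlinarith [pi_pos, sq_nonneg R]

-- ===================== main theorem =====================

/-- For any `k`-coloring `c` of the plane and `R > 1`, the periodic coloring `c̃_R`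
obtained by tiling the plane with `c` restricted to the square tile (periods `(2R, 0)`
and `(0, 2R)`) satisfies `|p^per(c̃_R) − p^table_R(c)| ≤ 8/R`. -/
theorem stmt17 (k : ℕ) (c : Plane → Fin k) (hc : Measurable c) (R : ℝ) (hR : 1 < R)
    (ctilde : Plane → Fin k)
    (hper : ∀ x : Plane, ctilde (x + vec (2*R) 0) = ctilde x ∧
      ctilde (x + vec 0 (2*R)) = ctilde x)
    (hagree : ∀ x ∈ squareHalf R, ctilde x = c x) :
    |pper ctilde (vec (2*R) 0) (vec 0 (2*R)) - ptable c R| ≤ 8 / R := by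
  have hR0 : (0:ℝ) < R := by linarith
  have hπ : (0:ℝ) < π := pi_pos
  -- measurability of ctilde
  have hct : Measurable ctilde := by
    have he : ctilde = fun x => c (wrap R x) := by
      funext x
      rw [← wrap_eq hR0 hper x]
      exact hagree _ ⟨wrapc_mem hR0 _, wrapc_mem hR0 _⟩
    rw [he]
    exact hc.comp (measurable_wrap R)
  -- measurability and bounds of the three integrands
  have hf1 : Measurable (Function.uncurry (F1 ctilde)) := by
    apply meas_ite (P := fun p : Plane × ℝ => ctilde p.1 = ctilde (p.1 + dir p.2))
    exact meas_eq (hct.comp measurable_fst) (hct.comp measurable_dirmap)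
  have hf2 : Measurable (Function.uncurry (G2 c R)) := by
    classical
    apply meas_ite (P := fun p : Plane × ℝ => c p.1 = c (p.1 + dir p.2) ∧ p.1 + dir p.2 ∈ square R)
    exact (meas_eq (hc.comp measurable_fst) (hc.comp measurable_dirmap)).inter
      (measurable_dirmap (measurableSet_square R))
  have hf3 : Measurable (Function.uncurry (H2 R)) := by
    classical
    apply meas_ite (P := fun p : Plane × ℝ => p.1 + dir p.2 ∈ square R)
    exact measurable_dirmap (measurableSet_square R)
  have hb1a : ∀ a θ, 0 ≤ F1 ctilde a θ := by
    intro a θ; unfold F1; split_ifs <;> norm_num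
  have hb1b : ∀ a θ, F1 ctilde a θ ≤ 1 := by
    intro a θ; unfold F1; split_ifs <;> norm_num
  have hb2a : ∀ a θ, 0 ≤ G2 c R a θ := by
    intro a θ; unfold G2; split_ifs <;> norm_num
  have hb2b : ∀ a θ, G2 c R a θ ≤ 1 := by
    intro a θ; unfold G2; split_ifs <;> norm_num
  have hb3a : ∀ a θ, 0 ≤ H2 R a θ := by
    intro a θ; unfold H2; split_ifs <;> norm_num
  have hb3b : ∀ a θ, H2 R a θ ≤ 1 := by
    intro a θ; unfold H2; split_ifs <;> norm_num
  have hboxne : ∀ a b a' b' : ℝ, volume (box a b a' b') ≠ ⊤ := by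
    intro a b a' b'
    rw [volume_box]
    exact ENNReal.mul_ne_top ENNReal.ofReal_ne_top ENNReal.ofReal_ne_top
  have hIntF : ∀ a b a' b' : ℝ,
      IntegrableOn (fun a => ∫ θ in (0:ℝ)..(2*π), F1 ctilde a θ) (box a b a' b') :=
    fun a b a' b' => L4 hf1 hb1a hb1b (hboxne a b a' b')
  have hIntG : ∀ a b a' b' : ℝ,
      IntegrableOn (fun a => ∫ θ in (0:ℝ)..(2*π), G2 c R a θ) (box a b a' b') :=
    fun a b a' b' => L4 hf2 hb2a hb2b (hboxne a b a' b')
  have hIntH : ∀ a b a' b' : ℝ,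
      IntegrableOn (fun a => ∫ θ in (0:ℝ)..(2*π), H2 R a θ) (box a b a' b') :=
    fun a b a' b' => L4 hf3 hb3a hb3b (hboxne a b a' b')
  -- periodicity of the F-slice and transfer
  have hFu : ∀ x : Plane, (∫ θ in (0:ℝ)..(2*π), F1 ctilde (x + vec (2*R) 0) θ)
      = ∫ θ in (0:ℝ)..(2*π), F1 ctilde x θ := by
    intro x
    apply intervalIntegral.integral_congr
    intro θ _
    have e : x + vec (2*R) 0 + dir θ = (x + dir θ) + vec (2*R) 0 := add_right_comm _ _ _
    unfold F1
    rw [e, (hper (x + dir θ)).1, (hper x).1]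
  have hFv : ∀ x : Plane, (∫ θ in (0:ℝ)..(2*π), F1 ctilde (x + vec 0 (2*R)) θ)
      = ∫ θ in (0:ℝ)..(2*π), F1 ctilde x θ := by
    intro x
    apply intervalIntegral.integral_congr
    intro θ _
    have e : x + vec 0 (2*R) + dir θ = (x + dir θ) + vec 0 (2*R) := add_right_comm _ _ _
    unfold F1
    rw [e, (hper (x + dir θ)).2, (hper x).2]
  have htrans : (∫ a in box 0 (2*R) 0 (2*R), ∫ θ in (0:ℝ)..(2*π), F1 ctilde a θ)
      = ∫ a in box (-R) R (-R) R, ∫ θ in (0:ℝ)..(2*π), F1 ctilde a θ :=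
    transfer hR0 _ hIntF hFu hFv
  -- geometry of the core box
  have hC0sub : box (1-R) (R-1) (1-R) (R-1) ⊆ box (-R) R (-R) R :=
    Set.Subset.trans (box_subset_box0 (by linarith) (by linarith))
      (box_subset_box1 (by linarith) (by linarith))
  have hshsq : squareHalf R ⊆ square R := by
    rintro x ⟨⟨h1,h2⟩,⟨h3,h4⟩⟩
    exact ⟨⟨h1, le_of_lt h2⟩, ⟨h3, le_of_lt h4⟩⟩
  have hmemsh : ∀ a ∈ box (1-R) (R-1) (1-R) (R-1), ∀ θ : ℝ, a + dir θ ∈ squareHalf R := by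
    rintro a ⟨⟨h1,h2⟩,⟨h3,h4⟩⟩ θ
    have e0 : (a + dir θ) 0 = a 0 + Real.cos θ := rfl
    have e1 : (a + dir θ) 1 = a 1 + Real.sin θ := rfl
    have hc1 := Real.neg_one_le_cos θ
    have hc2 := Real.cos_le_one θ
    have hs1 := Real.neg_one_le_sin θ
    have hs2 := Real.sin_le_one θ
    refine ⟨⟨?_, ?_⟩, ⟨?_, ?_⟩⟩ <;> [rw [e0]; rw [e0]; rw [e1]; rw [e1]] <;> linarith
  -- pointwise identities on the core
  have hFG : ∀ a ∈ box (1-R) (R-1) (1-R) (R-1),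
      (∫ θ in (0:ℝ)..(2*π), F1 ctilde a θ) = ∫ θ in (0:ℝ)..(2*π), G2 c R a θ := by
    intro a ha
    apply intervalIntegral.integral_congr
    intro θ _
    have m1 : a ∈ squareHalf R := hC0sub ha
    have m2 : a + dir θ ∈ squareHalf R := hmemsh a ha θ
    unfold F1 G2
    classical
    apply if_congr _ rfl rfl
    rw [hagree a m1, hagree _ m2]
    exact ⟨fun h => ⟨h, hshsq m2⟩, fun h => h.1⟩
  have hH2π : ∀ a ∈ box (1-R) (R-1) (1-R) (R-1),
      (∫ θ in (0:ℝ)..(2*π), H2 R a θ) = 2*π := by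
    intro a ha
    have : (∫ θ in (0:ℝ)..(2*π), H2 R a θ) = ∫ θ in (0:ℝ)..(2*π), (1:ℝ) := by
      apply intervalIntegral.integral_congr
      intro θ _
      unfold H2
      rw [if_pos (hshsq (hmemsh a ha θ))]
    rw [this]
    simp
  -- volumes
  have hvolsh : volume (box (-R) R (-R) R) = ENNReal.ofReal (2*R) * ENNReal.ofReal (2*R) := by
    rw [volume_box, show R - -R = 2*R by ring]
  have hvolC0 : volume (box (1-R) (R-1) (1-R) (R-1))
      = ENNReal.ofReal (2*R-2) * ENNReal.ofReal (2*R-2) := by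
    rw [volume_box, show R - 1 - (1-R) = 2*R-2 by ring]
  have hvolstrip : (volume (box (-R) R (-R) R \ box (1-R) (R-1) (1-R) (R-1))).toReal
      = 8*R - 4 := by
    rw [measure_diff hC0sub (measurableSet_box _ _ _ _).nullMeasurableSet (hboxne _ _ _ _),
      hvolsh, hvolC0,
      ENNReal.toReal_sub_of_le
        (mul_le_mul' (ENNReal.ofReal_le_ofReal (by linarith))
          (ENNReal.ofReal_le_ofReal (by linarith)))
        (ENNReal.mul_ne_top ENNReal.ofReal_ne_top ENNReal.ofReal_ne_top),
      ENNReal.toReal_mul, ENNReal.toReal_mul,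
      ENNReal.toReal_ofReal (by linarith : (0:ℝ) ≤ 2*R),
      ENNReal.toReal_ofReal (by linarith : (0:ℝ) ≤ 2*R-2)]
    ring
  -- main estimate : |I - N'| where both over box (-R) R (-R) R
  have hIN : |(∫ a in box (-R) R (-R) R, ∫ θ in (0:ℝ)..(2*π), F1 ctilde a θ)
      - ∫ a in box (-R) R (-R) R, ∫ θ in (0:ℝ)..(2*π), G2 c R a θ| ≤ 2*π*(8*R-4) := by
    have hiFG : IntegrableOn (fun a => (∫ θ in (0:ℝ)..(2*π), F1 ctilde a θ)
        - ∫ θ in (0:ℝ)..(2*π), G2 c R a θ) (box (-R) R (-R) R) :=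
      (hIntF (-R) R (-R) R).sub (hIntG (-R) R (-R) R)
    rw [← integral_sub (hIntF _ _ _ _) (hIntG _ _ _ _)]
    rw [← integral_inter_add_diff (measurableSet_box (1-R) (R-1) (1-R) (R-1)) hiFG]
    have hz : (∫ a in box (-R) R (-R) R ∩ box (1-R) (R-1) (1-R) (R-1),
        ((∫ θ in (0:ℝ)..(2*π), F1 ctilde a θ) - ∫ θ in (0:ℝ)..(2*π), G2 c R a θ)) = 0 := by
      rw [Set.inter_eq_self_of_subset_right hC0sub]
      rw [setIntegral_congr_fun (measurableSet_box _ _ _ _)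
        (g := fun _ => (0:ℝ)) (fun a ha => by rw [hFG a ha]; ring)]
      simp
    rw [hz, zero_add]
    have hb := norm_setIntegral_le_of_norm_le_const (μ := volume)
      (s := box (-R) R (-R) R \ box (1-R) (R-1) (1-R) (R-1)) (C := 2*π)
      (f := fun a => (∫ θ in (0:ℝ)..(2*π), F1 ctilde a θ) - ∫ θ in (0:ℝ)..(2*π), G2 c R a θ)
      (lt_of_le_of_lt (measure_mono Set.diff_subset) (lt_of_le_of_ne le_top (hboxne _ _ _ _)))
      (fun x _ => by
        have hx : ‖(∫ θ in (0:ℝ)..(2*π), F1 ctilde x θ)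
            - ∫ θ in (0:ℝ)..(2*π), G2 c R x θ‖ ≤ 2*π := by
          rw [Real.norm_eq_abs, abs_le]
          constructor
          · linarith [L2b hf1 hb1a hb1b x, L2a hf1 hb1a hb1b x, L2b hf2 hb2a hb2b x,
              L2a hf2 hb2a hb2b x]
          · linarith [L2b hf1 hb1a hb1b x, L2a hf1 hb1a hb1b x, L2b hf2 hb2a hb2b x,
              L2a hf2 hb2a hb2b x]
        exact hx)
    rw [Real.norm_eq_abs, measureReal_def, hvolstrip] at hb
    exact hb
  -- denominator bounds
  have hMl : 2*π*((2*R-2)*(2*R-2)) ≤ ∫ a in box (-R) R (-R) R, ∫ θ in (0:ℝ)..(2*π), H2 R a θ := by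
    have step1 : (∫ a in box (1-R) (R-1) (1-R) (R-1), ∫ θ in (0:ℝ)..(2*π), H2 R a θ)
        = 2*π*((2*R-2)*(2*R-2)) := by
      rw [setIntegral_congr_fun (measurableSet_box _ _ _ _) (g := fun _ => 2*π) hH2π,
        setIntegral_const, measureReal_def, hvolC0, ENNReal.toReal_mul,
        ENNReal.toReal_ofReal (by linarith : (0:ℝ) ≤ 2*R-2), smul_eq_mul]
      ring
    rw [← step1]
    exact setIntegral_mono_set (hIntH _ _ _ _)
      (Filter.Eventually.of_forall (fun a => L2a hf3 hb3a hb3b a))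
      (HasSubset.Subset.eventuallyLE hC0sub)
  have hMh : (∫ a in box (-R) R (-R) R, ∫ θ in (0:ℝ)..(2*π), H2 R a θ) ≤ 2*π*(2*R*(2*R)) := by
    have step : (∫ a in box (-R) R (-R) R, ∫ θ in (0:ℝ)..(2*π), H2 R a θ)
        ≤ ∫ _a in box (-R) R (-R) R, 2*π :=
      setIntegral_mono_on (hIntH _ _ _ _)
        (integrableOn_const (hboxne _ _ _ _))
        (measurableSet_box _ _ _ _) (fun a _ => L2b hf3 hb3a hb3b a)
    calc (∫ a in box (-R) R (-R) R, ∫ θ in (0:ℝ)..(2*π), H2 R a θ)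
        ≤ ∫ _a in box (-R) R (-R) R, 2*π := step
      _ = 2*π*(2*R*(2*R)) := by
          rw [setIntegral_const, measureReal_def, hvolsh, ENNReal.toReal_mul,
            ENNReal.toReal_ofReal (by linarith : (0:ℝ) ≤ 2*R), smul_eq_mul]
          ring
  have hNM : (∫ a in box (-R) R (-R) R, ∫ θ in (0:ℝ)..(2*π), G2 c R a θ)
      ≤ ∫ a in box (-R) R (-R) R, ∫ θ in (0:ℝ)..(2*π), H2 R a θ := by
    apply setIntegral_mono_on (hIntG _ _ _ _) (hIntH _ _ _ _) (measurableSet_box _ _ _ _)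
    intro a _
    apply intervalIntegral.integral_mono_on (by positivity)
      (L1 hf2 hb2a hb2b a) (L1 hf3 hb3a hb3b a)
    intro θ _
    unfold G2 H2
    split_ifs with p1 p2
    · exact le_rfl
    · exact absurd p1.2 p2
    · norm_num
    · exact le_rfl
  have hN0 : 0 ≤ ∫ a in box (-R) R (-R) R, ∫ θ in (0:ℝ)..(2*π), G2 c R a θ :=
    setIntegral_nonneg (measurableSet_box _ _ _ _) (fun a _ => L2a hf2 hb2a hb2b a)
  -- rewrite the goal
  rw [pper_eq, ptable_eq, para_eq_box hR0,
    setIntegral_congr_set (square_ae_squareHalf R)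
      (f := fun a => ∫ θ in (0:ℝ)..(2*π), G2 c R a θ),
    setIntegral_congr_set (square_ae_squareHalf R)
      (f := fun a => ∫ θ in (0:ℝ)..(2*π), H2 R a θ),
    squareHalf_eq_box, htrans, volume_box, sub_zero, ENNReal.toReal_mul,
    ENNReal.toReal_ofReal (by linarith : (0:ℝ) ≤ 2*R)]
  exact harith R hR _ _ _ hIN hN0 hNM hMl hMh

end
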